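/- Let 𝒳, 𝒴 be finite sets and 𝒟 ⊆ 𝒫(𝒳×𝒴) a closed convex set of joint distributions. Then min over q ∈ 𝒫(𝒴|𝒳) of max over p ∈ 𝒟 of E_p[−log q(Y|X)] equals max over p ∈ 𝒟 of min over q of E_p[−log q(Y|X)], and both equal max_{p ∈ 𝒟} H_p(Y|X). -/

import Mathlib

open scoped BigOperators

variable {𝒳 𝒴 : Type*}

/-- `p` is a probability distribution on `𝒳 × 𝒴`. -/
def IsDist [Fintype 𝒳] [Fintype 𝒴] (p : 𝒳 × 𝒴 → ℝ) : Prop :=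
  (∀ a, 0 ≤ p a) ∧ ∑ a, p a = 1

/-- `q` is a conditional distribution (stochastic matrix) from `𝒳` to `𝒴`. -/
def IsCond [Fintype 𝒴] (q : 𝒳 → 𝒴 → ℝ) : Prop :=
  (∀ x y, 0 ≤ q x y) ∧ ∀ x, ∑ y, q x y = 1

/-- Marginal of `X`. -/
noncomputable def margX [Fintype 𝒴] (p : 𝒳 × 𝒴 → ℝ) (x : 𝒳) : ℝ := ∑ y, p (x, y)

/-- Conditional entropy `H_p(Y|X)` (natural log, `0 log 0 = 0`). -/
noncomputable def condEnt [Fintype 𝒳] [Fintype 𝒴] (p : 𝒳 × 𝒴 → ℝ) : ℝ :=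
  -∑ a, p a * Real.log (p a / margX p a.1)

/-- Expected cross-entropy loss `E_p[-log q(Y|X)]`, valued in `EReal` with value `⊤`
when `q(y|x) = 0` while `p(x,y) > 0`. -/
noncomputable def CEE [Fintype 𝒳] [Fintype 𝒴] (p : 𝒳 × 𝒴 → ℝ) (q : 𝒳 → 𝒴 → ℝ) : EReal :=
  ∑ a, if q a.1 a.2 = 0 ∧ 0 < p a then (⊤ : EReal)
       else ((p a * (-Real.log (q a.1 a.2)) : ℝ) : EReal)

section AuxRL

set_option linter.unusedSectionVars false
variable [Fintype 𝒳] [Fintype 𝒴]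

lemma coe_sum' {ι : Type*} (s : Finset ι) (f : ι → ℝ) :
    ((∑ i ∈ s, f i : ℝ) : EReal) = ∑ i ∈ s, ((f i : ℝ) : EReal) :=
  map_sum (⟨⟨Real.toEReal, EReal.coe_zero⟩, EReal.coe_add⟩ : ℝ →+ EReal) f s

/-- real-valued cross-entropy loss -/
noncomputable def rCEE (p : 𝒳 × 𝒴 → ℝ) (q : 𝒳 → 𝒴 → ℝ) : ℝ :=
  ∑ a, p a * (-Real.log (q a.1 a.2))

/-- conditional distribution induced by `p` (uniform where the marginal vanishes) -/
noncomputable def condQ (p : 𝒳 × 𝒴 → ℝ) (x : 𝒳) (y : 𝒴) : ℝ :=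
  if margX p x = 0 then (Fintype.card 𝒴 : ℝ)⁻¹ else p (x, y) / margX p x

lemma margX_nonneg {p : 𝒳 × 𝒴 → ℝ} (hp : ∀ a, 0 ≤ p a) (x : 𝒳) : 0 ≤ margX p x :=
  Finset.sum_nonneg fun y _ => hp (x, y)

lemma le_margX {p : 𝒳 × 𝒴 → ℝ} (hp : ∀ a, 0 ≤ p a) (a : 𝒳 × 𝒴) : p a ≤ margX p a.1 := by
  have := Finset.single_le_sum (f := fun y => p (a.1, y))
    (fun y _ => hp (a.1, y)) (Finset.mem_univ a.2)
  simpa [margX] using this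

lemma margX_pos {p : 𝒳 × 𝒴 → ℝ} [Nonempty 𝒴] (hp : ∀ a, 0 < p a) (x : 𝒳) : 0 < margX p x :=
  Finset.sum_pos (fun y _ => hp (x, y)) Finset.univ_nonempty

lemma sum_margX (p : 𝒳 × 𝒴 → ℝ) : ∑ x, margX p x = ∑ a, p a := by
  rw [Fintype.sum_prod_type]; rfl

lemma margX_comb (c d : ℝ) (p p' : 𝒳 × 𝒴 → ℝ) (x : 𝒳) :
    margX (fun a => c * p a + d * p' a) x = c * margX p x + d * margX p' x := by
  simp [margX, Finset.sum_add_distrib, Finset.mul_sum]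

lemma isCond_condQ [Nonempty 𝒴] {p : 𝒳 × 𝒴 → ℝ} (hp : IsDist p) : IsCond (condQ p) := by
  have hcard : (Fintype.card 𝒴 : ℝ) ≠ 0 := by
    exact_mod_cast Fintype.card_ne_zero
  constructor
  · intro x y
    by_cases h : margX p x = 0
    · simp [condQ, h]
    · have hpos : 0 < margX p x := lt_of_le_of_ne (margX_nonneg hp.1 x) (Ne.symm h)
      simp only [condQ, if_neg h]
      exact div_nonneg (hp.1 _) hpos.le
  · intro x
    by_cases h : margX p x = 0
    · simp [condQ, h, Finset.sum_const, Finset.card_univ]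
    · simp only [condQ, if_neg h]
      rw [← Finset.sum_div]
      rw [div_eq_one_iff_eq h]
      rfl

lemma condQ_pos [Nonempty 𝒴] {p : 𝒳 × 𝒴 → ℝ} (hp : ∀ a, 0 < p a) (x : 𝒳) (y : 𝒴) :
    0 < condQ p x y := by
  have hm := margX_pos hp x
  simp only [condQ, if_neg hm.ne']
  exact div_pos (hp _) hm

lemma CEE_eq_rCEE {p : 𝒳 × 𝒴 → ℝ} {q : 𝒳 → 𝒴 → ℝ}
    (h : ∀ a, 0 < p a → q a.1 a.2 ≠ 0) :
    CEE p q = ((rCEE p q : ℝ) : EReal) := by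
  rw [rCEE, coe_sum']
  apply Finset.sum_congr rfl
  intro a _
  rw [if_neg]
  rintro ⟨h0, hpa⟩
  exact h a hpa h0

lemma condEnt_eq_sum (p : 𝒳 × 𝒴 → ℝ) :
    condEnt p = ∑ a, -(p a * Real.log (p a / margX p a.1)) := by
  simp [condEnt]

/-- Gibbs' inequality, real version. -/
lemma gibbs_real {p : 𝒳 × 𝒴 → ℝ} {q : 𝒳 → 𝒴 → ℝ} (hp : IsDist p) (hq : IsCond q)
    (hpos : ∀ a, 0 < p a → 0 < q a.1 a.2) : condEnt p ≤ rCEE p q := by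
  rw [← sub_nonpos, condEnt_eq_sum, rCEE, ← Finset.sum_sub_distrib]
  have key : ∀ a : 𝒳 × 𝒴, -(p a * Real.log (p a / margX p a.1)) - p a * (-Real.log (q a.1 a.2))
      ≤ margX p a.1 * q a.1 a.2 - p a := by
    intro a
    rcases eq_or_lt_of_le (hp.1 a) with h0 | hpa
    · rw [← h0]
      simp
      exact mul_nonneg (margX_nonneg hp.1 a.1) (hq.1 a.1 a.2)
    · have hqa := hpos a hpa
      have hm : 0 < margX p a.1 := lt_of_lt_of_le hpa (le_margX hp.1 a)
      have hfrac : 0 < q a.1 a.2 * margX p a.1 / p a := by positivity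
      have hlog := Real.log_le_sub_one_of_pos hfrac
      rw [Real.log_div (by positivity) hpa.ne', Real.log_mul hqa.ne' hm.ne'] at hlog
      have expand : -(p a * Real.log (p a / margX p a.1)) - p a * (-Real.log (q a.1 a.2))
          = p a * (Real.log (q a.1 a.2) + Real.log (margX p a.1) - Real.log (p a)) := by
        rw [Real.log_div hpa.ne' hm.ne']; ring
      rw [expand]
      calc p a * (Real.log (q a.1 a.2) + Real.log (margX p a.1) - Real.log (p a))
          ≤ p a * (q a.1 a.2 * margX p a.1 / p a - 1) :=
            mul_le_mul_of_nonneg_left hlog hpa.le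
        _ = margX p a.1 * q a.1 a.2 - p a := by field_simp
  calc ∑ a, (-(p a * Real.log (p a / margX p a.1)) - p a * (-Real.log (q a.1 a.2)))
      ≤ ∑ a, (margX p a.1 * q a.1 a.2 - p a) := Finset.sum_le_sum fun a _ => key a
    _ = 0 := by
        rw [Finset.sum_sub_distrib, hp.2, Fintype.sum_prod_type]
        have : ∀ x : 𝒳, ∑ y, margX p x * q x y = margX p x := by
          intro x; rw [← Finset.mul_sum, hq.2 x, mul_one]
        rw [Finset.sum_congr rfl fun x _ => this x, sum_margX, hp.2]
        norm_num

lemma rCEE_condQ {p : 𝒳 × 𝒴 → ℝ} (hp : IsDist p) : rCEE p (condQ p) = condEnt p := by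
  rw [rCEE, condEnt_eq_sum]
  apply Finset.sum_congr rfl
  intro a _
  rcases eq_or_lt_of_le (hp.1 a) with h0 | hpa
  · rw [← h0]; ring
  · have hm : 0 < margX p a.1 := lt_of_lt_of_le hpa (le_margX hp.1 a)
    simp only [condQ, if_neg hm.ne']
    ring

lemma rCEE_comb (c d : ℝ) (p p' : 𝒳 × 𝒴 → ℝ) (q : 𝒳 → 𝒴 → ℝ) :
    rCEE (fun a => c * p a + d * p' a) q = c * rCEE p q + d * rCEE p' q := by
  unfold rCEE
  rw [Finset.mul_sum, Finset.mul_sum, ← Finset.sum_add_distrib]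
  apply Finset.sum_congr rfl
  intro a _; ring

lemma condEnt_nonneg {p : 𝒳 × 𝒴 → ℝ} (hp : IsDist p) : 0 ≤ condEnt p := by
  rw [condEnt_eq_sum]
  apply Finset.sum_nonneg
  intro a _
  rcases eq_or_lt_of_le (hp.1 a) with h0 | hpa
  · rw [← h0]; simp
  · have hm : 0 < margX p a.1 := lt_of_lt_of_le hpa (le_margX hp.1 a)
    have hle : p a / margX p a.1 ≤ 1 := (div_le_one hm).mpr (le_margX hp.1 a)
    have := Real.log_nonpos (by positivity) hle
    simp only [neg_nonneg]
    exact mul_nonpos_of_nonneg_of_nonpos hpa.le this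

lemma condEnt_le_card {p : 𝒳 × 𝒴 → ℝ} (hp : IsDist p) : condEnt p ≤ (Fintype.card 𝒴 : ℝ) := by
  rw [condEnt_eq_sum]
  have key : ∀ a : 𝒳 × 𝒴, -(p a * Real.log (p a / margX p a.1)) ≤ margX p a.1 - p a := by
    intro a
    rcases eq_or_lt_of_le (hp.1 a) with h0 | hpa
    · rw [← h0]; simpa using margX_nonneg hp.1 a.1
    · have hm : 0 < margX p a.1 := lt_of_lt_of_le hpa (le_margX hp.1 a)
      have hfrac : 0 < margX p a.1 / p a := by positivity
      have hlog := Real.log_le_sub_one_of_pos hfrac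
      have : -(p a * Real.log (p a / margX p a.1)) = p a * Real.log (margX p a.1 / p a) := by
        rw [Real.log_div hpa.ne' hm.ne', Real.log_div hm.ne' hpa.ne']; ring
      rw [this]
      calc p a * Real.log (margX p a.1 / p a) ≤ p a * (margX p a.1 / p a - 1) :=
            mul_le_mul_of_nonneg_left hlog hpa.le
        _ = margX p a.1 - p a := by field_simp
  calc ∑ a, -(p a * Real.log (p a / margX p a.1)) ≤ ∑ a, (margX p a.1 - p a) :=
        Finset.sum_le_sum fun a _ => key a
    _ = (Fintype.card 𝒴 : ℝ) - 1 := by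
        rw [Finset.sum_sub_distrib, hp.2, Fintype.sum_prod_type]
        simp only [Finset.sum_const, Finset.card_univ, nsmul_eq_mul]
        rw [← Finset.mul_sum, sum_margX, hp.2, mul_one]
    _ ≤ (Fintype.card 𝒴 : ℝ) := by norm_num

lemma mul_log_tangent {u c : ℝ} (hu : 0 ≤ u) (hc : 0 < c) :
    u * Real.log c + u - c ≤ u * Real.log u := by
  rcases eq_or_lt_of_le hu with h0 | hu
  · rw [← h0]; simp [hc.le]
  · have h := Real.log_le_sub_one_of_pos (show 0 < c / u by positivity)
    rw [Real.log_div hc.ne' hu.ne'] at h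
    have h2 : Real.log c + 1 - c / u ≤ Real.log u := by linarith
    calc u * Real.log c + u - c = u * (Real.log c + 1 - c / u) := by field_simp
      _ ≤ u * Real.log u := mul_le_mul_of_nonneg_left h2 hu.le

lemma mul_log_mono {x z : ℝ} (hx : 0 ≤ x) (hz : x ≤ z) :
    x * Real.log x ≤ x * Real.log z := by
  rcases eq_or_lt_of_le hx with h0 | hx
  · rw [← h0]; simp
  · exact mul_le_mul_of_nonneg_left (Real.log_le_log hx hz) hx.le


lemma sum_mul_log_marg (p : 𝒳 × 𝒴 → ℝ) (f : 𝒳 → ℝ) :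
    ∑ a : 𝒳 × 𝒴, p a * f a.1 = ∑ x, margX p x * f x := by
  rw [Fintype.sum_prod_type]
  apply Finset.sum_congr rfl
  intro x _
  rw [margX, Finset.sum_mul]


lemma ent_decomp {p : 𝒳 × 𝒴 → ℝ} (hp : ∀ a, 0 ≤ p a) :
    ∑ a, p a * Real.log (p a / margX p a.1)
      = ∑ a, p a * Real.log (p a) - ∑ x, margX p x * Real.log (margX p x) := by
  have h1 : ∀ a : 𝒳 × 𝒴, p a * Real.log (p a / margX p a.1)
      = p a * Real.log (p a) - p a * Real.log (margX p a.1) := by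
    intro a
    rcases eq_or_lt_of_le (hp a) with h0 | hpa
    · rw [← h0]; ring
    · have hm : 0 < margX p a.1 := lt_of_lt_of_le hpa (le_margX hp a)
      rw [Real.log_div hpa.ne' hm.ne']; ring
  rw [Finset.sum_congr rfl fun a _ => h1 a, Finset.sum_sub_distrib,
    sum_mul_log_marg p (fun x => Real.log (margX p x))]


lemma condEnt_mix_le [Nonempty 𝒴] {p v : 𝒳 × 𝒴 → ℝ} (hp : IsDist p) (hvd : IsDist v)
    (hv : ∀ a, 0 < v a) {e : ℝ} (h0 : 0 < e) (h1 : e < 1) :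
    condEnt (fun a => (1 - e) * p a + e * v a)
      ≤ (1 - e) * condEnt p + e * condEnt v
        + (-((1 - e) * Real.log (1 - e)) - e * Real.log e) := by
  have h1e : (0:ℝ) < 1 - e := by linarith
  set r : 𝒳 × 𝒴 → ℝ := fun a => (1 - e) * p a + e * v a with hrdef
  have hrpos : ∀ a, 0 < r a := by
    intro a; have h2 := hp.1 a; have h3 := hv a; simp only [hrdef]; nlinarith
  have hrd : IsDist r := by
    refine ⟨fun a => (hrpos a).le, ?_⟩
    simp only [hrdef]
    rw [Finset.sum_add_distrib, ← Finset.mul_sum, ← Finset.mul_sum, hp.2, hvd.2]; ring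
  -- stage 1
  have st1 : ∑ a, ((1 - e) * (p a * Real.log (p a)) + e * (v a * Real.log (v a))
      + ((1 - e) * Real.log (1 - e)) * p a + (e * Real.log e) * v a)
      ≤ ∑ a, r a * Real.log (r a) := by
    apply Finset.sum_le_sum
    intro a _
    have hA : (0:ℝ) ≤ (1 - e) * p a := mul_nonneg h1e.le (hp.1 a)
    have hB : (0:ℝ) < e * v a := mul_pos h0 (hv a)
    have hra : r a = (1 - e) * p a + e * v a := rfl
    have e1 : ((1 - e) * p a) * Real.log ((1 - e) * p a)
        ≤ ((1 - e) * p a) * Real.log (r a) := mul_log_mono hA (by rw [hra]; linarith)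
    have e2 : (e * v a) * Real.log (e * v a)
        ≤ (e * v a) * Real.log (r a) := mul_log_mono hB.le (by rw [hra]; linarith)
    have d1 : ((1 - e) * p a) * Real.log ((1 - e) * p a)
        = (1 - e) * (p a * Real.log (p a)) + ((1 - e) * Real.log (1 - e)) * p a := by
      rcases eq_or_lt_of_le (hp.1 a) with hz | hpa
      · rw [← hz]; simp
      · rw [Real.log_mul h1e.ne' hpa.ne']; ring
    have d2 : (e * v a) * Real.log (e * v a)
        = e * (v a * Real.log (v a)) + (e * Real.log e) * v a := by
      rw [Real.log_mul h0.ne' (hv a).ne']; ring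
    have : r a * Real.log (r a)
        = ((1 - e) * p a) * Real.log (r a) + (e * v a) * Real.log (r a) := by
      rw [hra]; ring
    linarith [e1, e2, d1, d2, this]
  -- stage 2
  have st2 : ∑ x, margX r x * Real.log (margX r x)
      ≤ ∑ x, ((1 - e) * (margX p x * Real.log (margX p x))
        + e * (margX v x * Real.log (margX v x))) := by
    apply Finset.sum_le_sum
    intro x _
    have hc : 0 < margX r x := margX_pos hrpos x
    have hcomb : margX r x = (1 - e) * margX p x + e * margX v x := margX_comb _ _ _ _ _
    have t1 := mul_log_tangent (margX_nonneg hp.1 x) hc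
    have t2 := mul_log_tangent (margX_nonneg (fun a => (hv a).le) x) hc
    have u1 := mul_le_mul_of_nonneg_left t1 h1e.le
    have u2 := mul_le_mul_of_nonneg_left t2 h0.le
    have hkey : margX r x * Real.log (margX r x)
        = (1 - e) * (margX p x * Real.log (margX r x))
          + e * (margX v x * Real.log (margX r x)) := by rw [hcomb]; ring
    linarith [u1, u2, hkey, hcomb]
  -- assemble
  have dp := ent_decomp hp.1 (p := p)
  have dv := ent_decomp (fun a => (hv a).le) (p := v)
  have dr := ent_decomp hrd.1 (p := r)
  have hsum1 : ∑ a, ((1 - e) * (p a * Real.log (p a)) + e * (v a * Real.log (v a))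
      + ((1 - e) * Real.log (1 - e)) * p a + (e * Real.log e) * v a)
      = (1 - e) * (∑ a, p a * Real.log (p a)) + e * (∑ a, v a * Real.log (v a))
        + (1 - e) * Real.log (1 - e) + e * Real.log e := by
    simp only [Finset.sum_add_distrib, ← Finset.mul_sum]
    rw [hp.2, hvd.2]; ring
  have hsum2 : ∑ x, ((1 - e) * (margX p x * Real.log (margX p x))
      + e * (margX v x * Real.log (margX v x)))
      = (1 - e) * (∑ x, margX p x * Real.log (margX p x))
        + e * (∑ x, margX v x * Real.log (margX v x)) := by
    simp only [Finset.sum_add_distrib, ← Finset.mul_sum]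
  rw [hsum1] at st1
  rw [hsum2] at st2
  simp only [condEnt]
  rw [dp, dv, dr]
  linarith

open Filter in
lemma key_lemma [Nonempty 𝒴] (D : Set (𝒳 × 𝒴 → ℝ))
    (hD : ∀ r ∈ D, IsDist r ∧ ∀ a, 0 < r a)
    (hconvD : ∀ p ∈ D, ∀ p' ∈ D, ∀ t : ℝ, 0 ≤ t → t ≤ 1 →
      (fun a => (1 - t) * p a + t * p' a) ∈ D)
    {pstar : 𝒳 × 𝒴 → ℝ} (hstar : pstar ∈ D)
    (hmax : ∀ r ∈ D, condEnt r ≤ condEnt pstar)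
    {p : 𝒳 × 𝒴 → ℝ} (hp : p ∈ D) :
    rCEE p (condQ pstar) ≤ condEnt pstar := by
  obtain ⟨hstarD, hstarpos⟩ := hD pstar hstar
  obtain ⟨hpD, hppos⟩ := hD p hp
  set r : ℝ → (𝒳 × 𝒴 → ℝ) := fun t a => (1 - t) * pstar a + t * p a with hrdef
  have hbound : ∀ t ∈ Set.Ioo (0:ℝ) 1, rCEE p (condQ (r t)) ≤ condEnt pstar := by
    intro t ht
    have hmem : r t ∈ D := hconvD pstar hstar p hp t ht.1.le ht.2.le
    obtain ⟨hrD, hrpos⟩ := hD _ hmem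
    have hgibbs : condEnt pstar ≤ rCEE pstar (condQ (r t)) :=
      gibbs_real hstarD (isCond_condQ hrD) (fun a _ => condQ_pos hrpos a.1 a.2)
    have hident : condEnt (r t)
        = (1 - t) * rCEE pstar (condQ (r t)) + t * rCEE p (condQ (r t)) := by
      rw [← rCEE_condQ hrD]; exact rCEE_comb _ _ _ _ _
    have hle : condEnt (r t) ≤ condEnt pstar := hmax _ hmem
    have h1t : (0:ℝ) ≤ 1 - t := by linarith [ht.2]
    have hmul := mul_le_mul_of_nonneg_left hgibbs h1t
    have hfin : t * rCEE p (condQ (r t)) ≤ t * condEnt pstar := by linarith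
    exact (mul_le_mul_iff_right₀ ht.1).mp hfin
  have hmpos : ∀ x, 0 < margX pstar x := margX_pos hstarpos
  set g : ℝ → ℝ := fun t => ∑ a : 𝒳 × 𝒴,
      p a * (-Real.log ((r t a) / ((1 - t) * margX pstar a.1 + t * margX p a.1))) with hgdef
  have hg0 : g 0 = rCEE p (condQ pstar) := by
    simp only [hgdef, rCEE, condQ]
    apply Finset.sum_congr rfl
    intro a _
    rw [if_neg (hmpos a.1).ne']
    simp only [hrdef]
    norm_num
  have hcont : ContinuousAt g 0 := by
    apply tendsto_finset_sum
    intro a _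
    have hnum : ContinuousAt (fun t : ℝ => (1 - t) * pstar a + t * p a) 0 := by fun_prop
    have hden : ContinuousAt (fun t : ℝ => (1 - t) * margX pstar a.1 + t * margX p a.1) 0 := by
      fun_prop
    have hden0 : (1 - (0:ℝ)) * margX pstar a.1 + 0 * margX p a.1 ≠ 0 := by
      have := hmpos a.1; norm_num; linarith
    have hdiv : ContinuousAt (fun t : ℝ => ((1 - t) * pstar a + t * p a)
        / ((1 - t) * margX pstar a.1 + t * margX p a.1)) 0 := hnum.div hden hden0
    have hval : ((1 - (0:ℝ)) * pstar a + 0 * p a)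
        / ((1 - (0:ℝ)) * margX pstar a.1 + 0 * margX p a.1) ≠ 0 := by
      have h1 := hstarpos a; have h2 := hmpos a.1
      have heq : ((1 - (0:ℝ)) * pstar a + 0 * p a)
          / ((1 - (0:ℝ)) * margX pstar a.1 + 0 * margX p a.1)
          = pstar a / margX pstar a.1 := by norm_num
      rw [heq]
      positivity
    exact (ContinuousAt.mul continuousAt_const ((hdiv.log hval).neg))
  have htend : Tendsto (fun t => rCEE p (condQ (r t))) (nhdsWithin 0 (Set.Ioi 0))
      (nhds (rCEE p (condQ pstar))) := by
    rw [← hg0]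
    apply Filter.Tendsto.congr' _ (tendsto_nhdsWithin_of_tendsto_nhds hcont.tendsto)
    filter_upwards [Ioo_mem_nhdsGT_of_mem (Set.left_mem_Ico.mpr zero_lt_one)] with t ht
    have hrtpos : ∀ a, 0 < r t a := by
      intro a
      have h1 := hstarpos a; have h2 := hppos a
      simp only [hrdef]
      nlinarith [ht.1, ht.2]
    have hmt : ∀ x, margX (r t) x = (1 - t) * margX pstar x + t * margX p x :=
      fun x => margX_comb _ _ _ _ x
    have hmtpos : ∀ x, 0 < margX (r t) x := margX_pos hrtpos
    simp only [hgdef, rCEE, condQ]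
    apply Finset.sum_congr rfl
    intro a _
    rw [if_neg (hmtpos a.1).ne', hmt a.1]
  exact le_of_tendsto htend (by
    filter_upwards [Ioo_mem_nhdsGT_of_mem (Set.left_mem_Ico.mpr zero_lt_one)] with t ht
    exact hbound t ht)

lemma Hb_le {s : ℝ} (hs : 0 < s) (hs2 : s ≤ 1/2) :
    -((1 - s^2) * Real.log (1 - s^2)) - s^2 * Real.log (s^2) ≤ 3 * s := by
  have he : (0:ℝ) < s^2 := by positivity
  have h1e : (0:ℝ) < 1 - s^2 := by nlinarith
  have p1 : -((1 - s^2) * Real.log (1 - s^2)) ≤ s^2 := by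
    have h := Real.log_le_sub_one_of_pos (show (0:ℝ) < (1 - s^2)⁻¹ by positivity)
    rw [Real.log_inv] at h
    have hmul := mul_le_mul_of_nonneg_left h h1e.le
    have h3 : (1 - s^2) * ((1 - s^2)⁻¹ - 1) = s^2 := by field_simp; ring
    nlinarith [hmul]
  have p2 : -(s^2 * Real.log (s^2)) ≤ 2 * s := by
    have h := Real.log_le_sub_one_of_pos (show (0:ℝ) < s⁻¹ by positivity)
    rw [Real.log_inv] at h
    have hlog2 : Real.log (s^2) = 2 * Real.log s := by
      rw [Real.log_pow]; norm_num
    rw [hlog2]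
    have hmul := mul_le_mul_of_nonneg_left h (show (0:ℝ) ≤ 2 * s^2 by positivity)
    have h4 : 2 * s^2 * (s⁻¹ - 1) = 2*s - 2*s^2 := by field_simp
    nlinarith [hmul]
  have hss : s^2 ≤ s := by nlinarith
  linarith

lemma cond_le_one {q : 𝒳 → 𝒴 → ℝ} (hq : IsCond q) (x : 𝒳) (y : 𝒴) : q x y ≤ 1 := by
  rw [← hq.2 x]
  exact Finset.single_le_sum (fun y' _ => hq.1 x y') (Finset.mem_univ y)

lemma CEE_term_nonneg {p : 𝒳 × 𝒴 → ℝ} {q : 𝒳 → 𝒴 → ℝ} (hp : IsDist p) (hq : IsCond q)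
    (a : 𝒳 × 𝒴) :
    (0 : EReal) ≤ if q a.1 a.2 = 0 ∧ 0 < p a then (⊤ : EReal)
       else ((p a * (-Real.log (q a.1 a.2)) : ℝ) : EReal) := by
  split
  · exact le_top
  · have h1 : (0:ℝ) ≤ p a * (-Real.log (q a.1 a.2)) := by
      apply mul_nonneg (hp.1 a)
      simp only [neg_nonneg]
      exact Real.log_nonpos (hq.1 a.1 a.2) (cond_le_one hq a.1 a.2)
    exact_mod_cast h1

lemma condEnt_le_CEE {p : 𝒳 × 𝒴 → ℝ} {q : 𝒳 → 𝒴 → ℝ} (hp : IsDist p) (hq : IsCond q) :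
    ((condEnt p : ℝ) : EReal) ≤ CEE p q := by
  by_cases hc : ∀ a : 𝒳 × 𝒴, 0 < p a → q a.1 a.2 ≠ 0
  · rw [CEE_eq_rCEE hc]
    exact_mod_cast gibbs_real hp hq
      (fun a ha => lt_of_le_of_ne (hq.1 a.1 a.2) (Ne.symm (hc a ha)))
  · push_neg at hc
    obtain ⟨a0, hpa0, hq0⟩ := hc
    have htop : (⊤ : EReal) ≤ CEE p q := by
      calc (⊤:EReal) = (if q a0.1 a0.2 = 0 ∧ 0 < p a0 then (⊤:EReal)
            else ((p a0 * (-Real.log (q a0.1 a0.2)) : ℝ) : EReal)) := by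
            rw [if_pos ⟨hq0, hpa0⟩]
        _ ≤ CEE p q :=
            Finset.single_le_sum (fun a _ => CEE_term_nonneg hp hq a) (Finset.mem_univ a0)
    exact le_trans le_top htop

lemma iInf_CEE [Nonempty 𝒴] {p : 𝒳 × 𝒴 → ℝ} (hp : IsDist p) :
    (⨅ q : {q : 𝒳 → 𝒴 → ℝ // IsCond q}, CEE p q.1) = ((condEnt p : ℝ) : EReal) := by
  apply le_antisymm
  · have h := iInf_le (fun q : {q : 𝒳 → 𝒴 → ℝ // IsCond q} => CEE p q.1)
      ⟨condQ p, isCond_condQ hp⟩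
    have heq : CEE p (condQ p) = ((condEnt p : ℝ) : EReal) := by
      rw [CEE_eq_rCEE, rCEE_condQ hp]
      intro a ha
      have hm : 0 < margX p a.1 := lt_of_lt_of_le ha (le_margX hp.1 a)
      simp only [condQ, if_neg hm.ne']
      exact (div_pos ha hm).ne'
    rw [heq] at h
    exact h
  · exact le_iInf fun q => condEnt_le_CEE hp q.2

end AuxRL

/-- minimax theorem for optimal robust classification: for finite `𝒳, 𝒴`
and a closed convex set `𝒟` of joint distributions,
`min_q max_{p∈𝒟} E_p[-log q(Y|X)] = max_{p∈𝒟} min_q E_p[-log q(Y|X)] = max_{p∈𝒟} H_p(Y|X)`. -/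
theorem minimax_robust_learning [Fintype 𝒳] [Fintype 𝒴]
    (𝒟 : Set (𝒳 × 𝒴 → ℝ)) (h𝒟 : ∀ p ∈ 𝒟, IsDist p)
    (hclosed : IsClosed 𝒟) (hconv : Convex ℝ 𝒟) (hne : 𝒟.Nonempty) :
    (⨅ q : {q : 𝒳 → 𝒴 → ℝ // IsCond q}, ⨆ p : 𝒟, CEE p.1 q.1)
      = (⨆ p : 𝒟, ⨅ q : {q : 𝒳 → 𝒴 → ℝ // IsCond q}, CEE p.1 q.1) ∧
    (⨅ q : {q : 𝒳 → 𝒴 → ℝ // IsCond q}, ⨆ p : 𝒟, CEE p.1 q.1)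
      = ⨆ p : 𝒟, ((condEnt p.1 : ℝ) : EReal) := by
  classical
  obtain ⟨p₀, hp₀D⟩ := hne
  have hp₀ := h𝒟 p₀ hp₀D
  haveI hXYne : Nonempty (𝒳 × 𝒴) := by
    by_contra h
    rw [not_nonempty_iff] at h
    have h2 := hp₀.2
    rw [Finset.univ_eq_empty, Finset.sum_empty] at h2
    norm_num at h2
  haveI hX : Nonempty 𝒳 := ⟨(Classical.arbitrary (𝒳 × 𝒴)).1⟩
  haveI hY : Nonempty 𝒴 := ⟨(Classical.arbitrary (𝒳 × 𝒴)).2⟩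
  set Yv : EReal := ⨆ p : 𝒟, ((condEnt p.1 : ℝ) : EReal) with hYvdef
  have hsupinf : (⨆ p : 𝒟, ⨅ q : {q : 𝒳 → 𝒴 → ℝ // IsCond q}, CEE p.1 q.1) = Yv :=
    iSup_congr fun p => iInf_CEE (h𝒟 p.1 p.2)
  have easy : Yv ≤ ⨅ q : {q : 𝒳 → 𝒴 → ℝ // IsCond q}, ⨆ p : 𝒟, CEE p.1 q.1 := by
    rw [← hsupinf]
    exact le_iInf fun q => iSup_mono fun p => iInf_le _ q
  have hDcomp : IsCompact 𝒟 := by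
    apply IsCompact.of_isClosed_subset
      (isCompact_univ_pi (fun _ : 𝒳 × 𝒴 => (isCompact_Icc : IsCompact (Set.Icc (0:ℝ) 1)))) hclosed
    intro p hpD
    simp only [Set.mem_pi, Set.mem_univ, forall_true_left, Set.mem_Icc]
    intro a
    refine ⟨(h𝒟 p hpD).1 a, ?_⟩
    rw [← (h𝒟 p hpD).2]
    exact Finset.single_le_sum (fun i _ => (h𝒟 p hpD).1 i) (Finset.mem_univ a)
  set c : ℝ := (Fintype.card 𝒴 : ℝ) with hcdef
  have hc0 : (0:ℝ) ≤ c := Nat.cast_nonneg _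
  have hYvle : Yv ≤ ((c : ℝ) : EReal) :=
    iSup_le fun p => EReal.coe_le_coe_iff.mpr (condEnt_le_card (h𝒟 p.1 p.2))
  have hYvge : ((condEnt p₀ : ℝ) : EReal) ≤ Yv :=
    le_iSup (fun p : 𝒟 => ((condEnt p.1 : ℝ) : EReal)) ⟨p₀, hp₀D⟩
  have hYvnetop : Yv ≠ ⊤ := (lt_of_le_of_lt hYvle (EReal.coe_lt_top c)).ne
  have hYvnebot : Yv ≠ ⊥ := (lt_of_lt_of_le (EReal.bot_lt_coe _) hYvge).ne'
  have step : ∀ δ : ℝ, 0 < δ →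
      (⨅ q : {q : 𝒳 → 𝒴 → ℝ // IsCond q}, ⨆ p : 𝒟, CEE p.1 q.1) ≤ Yv + (δ : EReal) := by
    intro δ hδ
    set s : ℝ := min (1/2) (δ / (c + 6)) with hsdef
    have hs0 : 0 < s := lt_min (by norm_num) (by positivity)
    have hs2 : s ≤ 1/2 := min_le_left _ _
    set e : ℝ := s^2 with hedef
    have he0 : 0 < e := by positivity
    have he1 : e < 1 := by nlinarith
    have h1e : (0:ℝ) < 1 - e := by linarith
    set u : 𝒳 × 𝒴 → ℝ := fun _ => (Fintype.card (𝒳 × 𝒴) : ℝ)⁻¹ with hudef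
    have hcardXY : (0:ℝ) < (Fintype.card (𝒳 × 𝒴) : ℝ) := by exact_mod_cast Fintype.card_pos
    have hupos : ∀ a, 0 < u a := fun a => by simp only [hudef]; positivity
    have hud : IsDist u := by
      refine ⟨fun a => (hupos a).le, ?_⟩
      simp only [hudef, Finset.sum_const, Finset.card_univ, nsmul_eq_mul]
      field_simp
    set T : (𝒳 × 𝒴 → ℝ) → (𝒳 × 𝒴 → ℝ) := fun p a => (1 - e) * p a + e * u a with hTdef
    set D' : Set (𝒳 × 𝒴 → ℝ) := T '' 𝒟 with hD'def
    have hD' : ∀ r ∈ D', IsDist r ∧ ∀ a, 0 < r a := by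
      rintro _ ⟨p, hpD, rfl⟩
      have hpd := h𝒟 p hpD
      refine ⟨⟨fun a => ?_, ?_⟩, fun a => ?_⟩
      · have h1 := hpd.1 a; have h2 := (hupos a).le
        simp only [hTdef]; nlinarith
      · simp only [hTdef]
        rw [Finset.sum_add_distrib, ← Finset.mul_sum, ← Finset.mul_sum, hpd.2, hud.2]; ring
      · have h1 := hpd.1 a; have h2 := hupos a
        simp only [hTdef]; nlinarith
    have hconvD' : ∀ p ∈ D', ∀ p' ∈ D', ∀ t : ℝ, 0 ≤ t → t ≤ 1 →
        (fun a => (1 - t) * p a + t * p' a) ∈ D' := by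
      rintro _ ⟨p, hpD, rfl⟩ _ ⟨p', hp'D, rfl⟩ t ht0 ht1
      have hmem := hconv hpD hp'D (by linarith : (0:ℝ) ≤ 1 - t) ht0 (by ring : (1 - t) + t = 1)
      refine ⟨(1 - t) • p + t • p', hmem, ?_⟩
      funext a
      simp only [hTdef, Pi.add_apply, Pi.smul_apply, smul_eq_mul]
      ring
    have hTcont : Continuous T :=
      continuous_pi (fun a => (continuous_const.mul (continuous_apply a)).add continuous_const)
    have hD'comp : IsCompact D' := hDcomp.image hTcont
    have hD'ne : D'.Nonempty := ⟨T p₀, ⟨p₀, hp₀D, rfl⟩⟩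
    have hcontEnt : ContinuousOn condEnt D' := by
      intro pz hpz
      apply ContinuousAt.continuousWithinAt
      obtain ⟨hpzd, hpzpos⟩ := hD' pz hpz
      have hCA : ContinuousAt
          (fun p : 𝒳 × 𝒴 → ℝ => -∑ a, p a * Real.log (p a / margX p a.1)) pz := by
        apply ContinuousAt.neg
        apply tendsto_finset_sum
        intro a _
        have hma : ContinuousAt (fun p : 𝒳 × 𝒴 → ℝ => margX p a.1) pz := by
          apply tendsto_finset_sum
          intro y _
          exact (continuous_apply ((a.1 : 𝒳), y)).continuousAt
        have hpa : ContinuousAt (fun p : 𝒳 × 𝒴 → ℝ => p a) pz :=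
          (continuous_apply a).continuousAt
        have hdiv : ContinuousAt (fun p : 𝒳 × 𝒴 → ℝ => p a / margX p a.1) pz :=
          hpa.div hma (margX_pos hpzpos a.1).ne'
        exact hpa.mul (hdiv.log (div_pos (hpzpos a) (margX_pos hpzpos a.1)).ne')
      exact hCA
    obtain ⟨pst, hpstD', hpstmax⟩ := hD'comp.exists_isMaxOn hD'ne hcontEnt
    have hpstD'' : pst ∈ D' := hpstD'
    have hmax' : ∀ r ∈ D', condEnt r ≤ condEnt pst := fun r hr => hpstmax hr
    obtain ⟨hpstd, hpstpos⟩ := hD' pst hpstD''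
    have hqpos : ∀ x y, 0 < condQ pst x y := fun x y => condQ_pos hpstpos x y
    have hqcond : IsCond (condQ pst) := isCond_condQ hpstd
    obtain ⟨pbar, hpbarD, hpbareq⟩ := hpstD'
    have hpst_eq : pst = fun a => (1 - e) * pbar a + e * u a := by
      rw [← hpbareq, hTdef]
    have hmix : condEnt pst ≤ (1 - e) * condEnt pbar + e * condEnt u
        + (-((1 - e) * Real.log (1 - e)) - e * Real.log e) := by
      rw [hpst_eq]
      exact condEnt_mix_le (h𝒟 pbar hpbarD) hud hupos he0 he1
    have hHb := Hb_le hs0 hs2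
    rw [← hedef] at hHb
    have hmix2 : condEnt pst ≤ (1 - e) * condEnt pbar + e * c + 3 * s := by
      have hcu : condEnt u ≤ c := condEnt_le_card hud
      have := mul_le_mul_of_nonneg_left hcu he0.le
      linarith
    have hperp : ∀ p ∈ 𝒟, rCEE p (condQ pst) ≤ condEnt pbar + δ := by
      intro p hpD
      have hTmem : T p ∈ D' := ⟨p, hpD, rfl⟩
      have hkey := key_lemma D' hD' hconvD' hpstD'' hmax' hTmem
      have hTp : T p = fun a => (1 - e) * p a + e * u a := by rw [hTdef]
      have hsplit : rCEE (T p) (condQ pst)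
          = (1 - e) * rCEE p (condQ pst) + e * rCEE u (condQ pst) := by
        rw [hTp]
        exact rCEE_comb _ _ _ _ _
      have hglb : 0 ≤ rCEE u (condQ pst) :=
        le_trans (condEnt_nonneg hud) (gibbs_real hud hqcond (fun a _ => hqpos a.1 a.2))
      have hge : 0 ≤ e * rCEE u (condQ pst) := mul_nonneg he0.le hglb
      have h1 : (1 - e) * rCEE p (condQ pst) ≤ condEnt pst := by
        rw [hsplit] at hkey
        linarith
      have hA : (1 - e) * (rCEE p (condQ pst) - condEnt pbar) ≤ e * c + 3 * s := by
        nlinarith [h1, hmix2]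
      have hsδ : s * (c + 6) ≤ δ := by
        have hle : s ≤ δ / (c + 6) := min_le_right _ _
        exact (le_div_iff₀ (by positivity : (0:ℝ) < c + 6)).mp hle
      rcases le_or_gt (rCEE p (condQ pst)) (condEnt pbar) with hcase | hcase
      · linarith
      · have hec : e * c ≤ (1/2) * (s * c) := by
          nlinarith [mul_le_mul_of_nonneg_right hs2 (mul_nonneg hs0.le hc0)]
        have hfrac : (1/2) * (rCEE p (condQ pst) - condEnt pbar)
            ≤ (1 - e) * (rCEE p (condQ pst) - condEnt pbar) := by
          have h12 : (1:ℝ)/2 ≤ 1 - e := by nlinarith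
          exact mul_le_mul_of_nonneg_right h12 (by linarith)
        linarith
    have hsup : (⨆ p : 𝒟, CEE p.1 (condQ pst)) ≤ ((condEnt pbar + δ : ℝ) : EReal) := by
      apply iSup_le
      intro p
      rw [CEE_eq_rCEE (fun a _ => (hqpos a.1 a.2).ne')]
      exact EReal.coe_le_coe_iff.mpr (hperp p.1 p.2)
    calc (⨅ q : {q : 𝒳 → 𝒴 → ℝ // IsCond q}, ⨆ p : 𝒟, CEE p.1 q.1)
        ≤ ⨆ p : 𝒟, CEE p.1 (condQ pst) :=
          iInf_le (fun q : {q : 𝒳 → 𝒴 → ℝ // IsCond q} => ⨆ p : 𝒟, CEE p.1 q.1)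
            ⟨condQ pst, hqcond⟩
      _ ≤ ((condEnt pbar + δ : ℝ) : EReal) := hsup
      _ = ((condEnt pbar : ℝ) : EReal) + (δ : EReal) := by rw [EReal.coe_add]
      _ ≤ Yv + (δ : EReal) := add_le_add_left
          (le_iSup (fun p : 𝒟 => ((condEnt p.1 : ℝ) : EReal)) ⟨pbar, hpbarD⟩) _
  have hard : (⨅ q : {q : 𝒳 → 𝒴 → ℝ // IsCond q}, ⨆ p : 𝒟, CEE p.1 q.1) ≤ Yv := by
    set X : EReal := ⨅ q : {q : 𝒳 → 𝒴 → ℝ // IsCond q}, ⨆ p : 𝒟, CEE p.1 q.1 with hXdef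
    by_cases hXbot : X = ⊥
    · rw [hXbot]; exact bot_le
    have hXtop : X ≠ ⊤ := by
      intro h
      have h1 := step 1 one_pos
      rw [h] at h1
      have h2 : Yv + ((1:ℝ) : EReal) < ⊤ :=
        EReal.add_lt_top hYvnetop (EReal.coe_ne_top 1)
      exact absurd (top_le_iff.mp h1) h2.ne
    have hXeq : X = ((X.toReal : ℝ) : EReal) := (EReal.coe_toReal hXtop hXbot).symm
    have hYeq : Yv = ((Yv.toReal : ℝ) : EReal) := (EReal.coe_toReal hYvnetop hYvnebot).symm
    rw [hXeq, hYeq, EReal.coe_le_coe_iff]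
    apply le_of_forall_pos_le_add
    intro δ hδ
    have h1 := step δ hδ
    rw [hXeq, hYeq, ← EReal.coe_add, EReal.coe_le_coe_iff] at h1
    exact h1
  have hmain : (⨅ q : {q : 𝒳 → 𝒴 → ℝ // IsCond q}, ⨆ p : 𝒟, CEE p.1 q.1) = Yv :=
    le_antisymm hard easy
  exact ⟨hmain.trans hsupinf.symm, hmain⟩
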